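/- Let W be a holomorphic vector field germ at the origin of ℂ² and F a formal power series with F(0,0) = 0. Then the formal map Φ_W^F : (x,y) ↦ Φ_W^{F(x,y)}(x,y) (the flow of W for time F(x,y)) is a formal change of coordinates (i.e., its Jacobian at the origin is invertible) if and only if (W·F)(0,0) ≠ −1; it fixes the origin, and if W is singular at the origin it is tangent to the identity. -/

import Mathlib

/- Statement 15 (Proposition chg_coord (1)): for a holomorphic vector field germ W and a
formal power series F with F(0,0) = 0, the formal map Φ_W^F : (x,y) ↦ Φ_W^{F(x,y)}(x,y)
(the flow of W for time F) fixes the origin, is a formal change of coordinates iff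
(W·F)(0,0) ≠ −1, and is tangent to the identity whenever W is singular at the origin.
Formalization: formal power series in ℂ[[x,y]]; the flow substituted at time F is
Σ_{n≥0} Fⁿ/n! · W·ⁿ(Id), computed degreewise (the sum is finite in each degree since
F(0,0) = 0); "formal change of coordinates" = invertible Jacobian at the origin. -/

noncomputable section
open MvPowerSeries

abbrev R2 := MvPowerSeries (Fin 2) ℂ

def pd (i : Fin 2) (f : R2) : R2 :=
  fun d => ((d i : ℂ) + 1) * MvPowerSeries.coeff (d + Finsupp.single i 1) f

def lieD (W : Fin 2 → R2) (f : R2) : R2 := W 0 * pd 0 f + W 1 * pd 1 f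

/-- n-th iterated Lie derivative W·ⁿ -/
def iterLie (W : Fin 2 → R2) (n : ℕ) (f : R2) : R2 := (lieD W)^[n] f

/-- the i-th component of the formal flow Φ_W^F = Σₙ Fⁿ/n! · W·ⁿ(Id), computed
degreewise (only the terms with n ≤ |d| contribute to the coefficient of degree d,
since F has zero constant term). -/
def flowComp (W : Fin 2 → R2) (F : R2) (i : Fin 2) : R2 :=
  fun d => MvPowerSeries.coeff d
    (∑ n ∈ Finset.range ((d.sum fun _ e => e) + 1),
      ((n.factorial : ℂ))⁻¹ • (F ^ n * iterLie W n (MvPowerSeries.X i)))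

lemma coeff_single_mul (F G : R2) (j : Fin 2)
    (hF0 : MvPowerSeries.constantCoeff F = 0) :
    MvPowerSeries.coeff (Finsupp.single j 1) (F * G)
      = MvPowerSeries.coeff (Finsupp.single j 1) F
        * MvPowerSeries.constantCoeff G := by
  rw [MvPowerSeries.coeff_mul, Finsupp.antidiagonal_single]
  rw [show Finset.HasAntidiagonal.antidiagonal (1 : ℕ) = ({(0,1),(1,0)} : Finset (ℕ × ℕ)) from rfl]
  simp [Finsupp.single_zero, hF0, MvPowerSeries.coeff_zero_eq_constantCoeff]

lemma constCoeff_pd (k : Fin 2) (f : R2) :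
    MvPowerSeries.constantCoeff (pd k f)
      = MvPowerSeries.coeff (Finsupp.single k 1) f := by
  show ((((0 : Fin 2 →₀ ℕ) k : ℂ)) + 1)
      * MvPowerSeries.coeff (0 + Finsupp.single k 1) f = _
  simp

lemma constCoeff_lieD_X (W : Fin 2 → R2) (i : Fin 2) :
    MvPowerSeries.constantCoeff (lieD W (MvPowerSeries.X i))
      = MvPowerSeries.constantCoeff (W i) := by
  rw [lieD, map_add, map_mul, map_mul, constCoeff_pd, constCoeff_pd,
    MvPowerSeries.coeff_index_single_X, MvPowerSeries.coeff_index_single_X]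
  fin_cases i <;> simp

lemma coeff_flow (W : Fin 2 → R2) (F : R2)
    (hF0 : MvPowerSeries.constantCoeff F = 0) (i j : Fin 2) :
    MvPowerSeries.coeff (Finsupp.single j 1) (flowComp W F i)
      = (if i = j then 1 else 0)
        + MvPowerSeries.coeff (Finsupp.single j 1) F
          * MvPowerSeries.constantCoeff (W i) := by
  have h0 : MvPowerSeries.coeff (Finsupp.single j 1) (flowComp W F i)
      = MvPowerSeries.coeff (Finsupp.single j 1)
        (∑ n ∈ Finset.range (((Finsupp.single j 1).sum fun _ e => e) + 1),
          ((n.factorial : ℂ))⁻¹ • (F ^ n * iterLie W n (MvPowerSeries.X i))) := rfl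
  rw [h0, show ((Finsupp.single j 1).sum fun _ e => e) = 1 by simp]
  rw [Finset.sum_range_succ, Finset.sum_range_one]
  simp only [iterLie, Function.iterate_zero, Function.iterate_one, id_eq, pow_zero, pow_one,
    Nat.factorial_zero, Nat.factorial_one, Nat.cast_one, inv_one, one_smul, one_mul, map_add]
  rw [coeff_single_mul F _ j hF0, constCoeff_lieD_X,
    MvPowerSeries.coeff_index_single_X]
  simp [eq_comm]

theorem stmt15 (W : Fin 2 → R2) (F : R2)
    (hF0 : MvPowerSeries.constantCoeff F = 0) :
    -- Φ_W^F fixes the origin :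
    (∀ i, MvPowerSeries.constantCoeff (flowComp W F i) = 0) ∧
    -- it is a formal change of coordinates iff (W·F)(0,0) ≠ −1 :
    ((Matrix.of fun i j : Fin 2 =>
        MvPowerSeries.coeff (Finsupp.single j 1) (flowComp W F i)).det ≠ 0 ↔
      MvPowerSeries.constantCoeff (lieD W F) ≠ -1) ∧
    -- if W is singular it is tangent to the identity :
    ((∀ i, MvPowerSeries.constantCoeff (W i) = 0) →
      ∀ i j : Fin 2, MvPowerSeries.coeff (Finsupp.single j 1) (flowComp W F i)
        = if i = j then 1 else 0) := by

  refine ⟨?_, ?_, ?_⟩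
  · intro i
    have h0 : MvPowerSeries.constantCoeff (flowComp W F i)
        = MvPowerSeries.coeff 0
          (∑ n ∈ Finset.range (((0 : Fin 2 →₀ ℕ).sum fun _ e => e) + 1),
            ((n.factorial : ℂ))⁻¹ • (F ^ n * iterLie W n (MvPowerSeries.X i))) := rfl
    rw [h0, show ((0 : Fin 2 →₀ ℕ).sum fun _ e => e) = 0 by simp,
      Finset.sum_range_one]
    simp [iterLie, MvPowerSeries.coeff_zero_X]
  · have hc : MvPowerSeries.constantCoeff (lieD W F)
        = MvPowerSeries.constantCoeff (W 0)
            * MvPowerSeries.coeff (Finsupp.single 0 1) F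
          + MvPowerSeries.constantCoeff (W 1)
            * MvPowerSeries.coeff (Finsupp.single 1 1) F := by
      rw [lieD, map_add, map_mul, map_mul, constCoeff_pd, constCoeff_pd]
    have hdet : (Matrix.of fun i j : Fin 2 =>
        MvPowerSeries.coeff (Finsupp.single j 1) (flowComp W F i)).det
        = 1 + MvPowerSeries.constantCoeff (lieD W F) := by
      rw [Matrix.det_fin_two]
      simp only [Matrix.of_apply, coeff_flow W F hF0, hc]
      norm_num
      ring
    rw [hdet]
    constructor
    · intro h h'
      exact h (by rw [h']; ring)
    · intro h h'
      exact h (by linear_combination h')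
  · intro hW i j
    rw [coeff_flow W F hF0, hW i, mul_zero, add_zero]
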